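/- Let $(X_t)$ be a Markov chain on a finite state space $V$, $I \subseteq V$ finite with $X_0 \notin I$, and for each $v \in I$ let $H_v(k) = \prod_{i=0}^k(1-p(X_i,v))$ (with $H_v(-1)=1$), $r_v$ the first time $H_v$ drops below a fixed threshold $\lambda/L \in (0,1]$, and $T_v$ the hitting time of $v$. Define $S_k^I = \mathbf{1}\{\forall v \in I : T_v > k\wedge r_v\}\prod_{v\in I}H_v(k\wedge r_v - 1)^{-1}$. Then $(S_k^I)_{k\ge 0}$ is a supermartingale with respect to the natural filtration of $(X_t)$. -/

import Mathlib

open Finset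

/-- `HmP p ω v t = ∏_{i<t} (1 - p(ω_i,v))`, i.e. `H_v(t-1)` with `H_v(-1)=1`. -/
noncomputable def HmP {V : Type*} (p : V → V → ℝ) (ω : ℕ → V) (v : V) (t : ℕ) : ℝ :=
  ∏ i ∈ Finset.range t, (1 - p (ω i) v)

/-- `minKR p c ω v k = min k r_v`, where `r_v = min{t : H_v(t) < c}`
(`= ∞` if no such `t`). -/
noncomputable def minKR {V : Type*} (p : V → V → ℝ) (c : ℝ)
    (ω : ℕ → V) (v : V) (k : ℕ) : ℕ :=
  sInf ({t : ℕ | HmP p ω v (t + 1) < c} ∪ {k})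

open scoped Classical in
/-- `S_k^I = 1{∀ v ∈ I : T_v > k ∧ r_v} ∏_{v∈I} H_v(k ∧ r_v - 1)⁻¹` evaluated on
the trajectory `ω`. -/
noncomputable def Sproc {V : Type*} (p : V → V → ℝ) (c : ℝ) (I : Finset V)
    (k : ℕ) (ω : ℕ → V) : ℝ :=
  (if ∀ v ∈ I, ∀ t ≤ minKR p c ω v k, ω t ≠ v then (1 : ℝ) else 0) *
    ∏ v ∈ I, (HmP p ω v (minKR p c ω v k))⁻¹

lemma sInf_union_congr {A B : Set ℕ} (m : ℕ)
    (h : ∀ t < m, (t ∈ A ↔ t ∈ B)) :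
    sInf (A ∪ {m}) = sInf (B ∪ {m}) := by
  have key : ∀ (A B : Set ℕ), (∀ t < m, (t ∈ A ↔ t ∈ B)) →
      sInf (A ∪ {m}) ≤ sInf (B ∪ {m}) := by
    intro A B h
    have hne : (B ∪ {m} : Set ℕ).Nonempty := ⟨m, Set.mem_union_right _ rfl⟩
    rcases Nat.sInf_mem hne with hB | hm
    · rcases lt_or_ge (sInf (B ∪ {m})) m with hlt | hge
      · exact Nat.sInf_le (Set.mem_union_left _ ((h _ hlt).2 hB))
      · exact le_trans (Nat.sInf_le (Set.mem_union_right _ rfl)) hge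
    · simp only [Set.mem_singleton_iff] at hm
      rw [hm]; exact Nat.sInf_le (Set.mem_union_right _ rfl)
  exact le_antisymm (key A B h) (key B A fun t ht => (h t ht).symm)

lemma HmP_eq_of_agree {V : Type*} (p : V → V → ℝ) {ω ω' : ℕ → V} (v : V) (t : ℕ)
    (h : ∀ i < t, ω i = ω' i) : HmP p ω v t = HmP p ω' v t :=
  Finset.prod_congr rfl fun i hi => by rw [h i (Finset.mem_range.1 hi)]

lemma minKR_le {V : Type*} (p : V → V → ℝ) (c : ℝ) (ω : ℕ → V) (v : V) (k : ℕ) :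
    minKR p c ω v k ≤ k :=
  Nat.sInf_le (Set.mem_union_right _ rfl)

lemma minKR_mem {V : Type*} (p : V → V → ℝ) (c : ℝ) (ω : ℕ → V) (v : V) (k : ℕ) :
    minKR p c ω v k ∈ {t : ℕ | HmP p ω v (t + 1) < c} ∪ {k} :=
  Nat.sInf_mem ⟨k, Set.mem_union_right _ rfl⟩

lemma minKR_mono {V : Type*} (p : V → V → ℝ) (c : ℝ) (ω : ℕ → V) (v : V) (k : ℕ) :
    minKR p c ω v k ≤ minKR p c ω v (k + 1) := by
  rcases minKR_mem p c ω v (k + 1) with hs | hk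
  · exact Nat.sInf_le (Set.mem_union_left _ hs)
  · simp only [Set.mem_singleton_iff] at hk
    rw [hk]
    exact (minKR_le p c ω v k).trans (Nat.le_succ k)

lemma minKR_succ_eq_of_le {V : Type*} {p : V → V → ℝ} {c : ℝ} {ω : ℕ → V} {v : V} {k : ℕ}
    (h : minKR p c ω v (k + 1) ≤ k) : minKR p c ω v (k + 1) = minKR p c ω v k := by
  refine le_antisymm ?_ (minKR_mono p c ω v k)
  rcases minKR_mem p c ω v k with hs | hk
  · exact Nat.sInf_le (Set.mem_union_left _ hs)
  · simp only [Set.mem_singleton_iff] at hk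
    rw [hk]; exact h

lemma minKR_eq_self_of_succ {V : Type*} {p : V → V → ℝ} {c : ℝ} {ω : ℕ → V} {v : V} {k : ℕ}
    (h : minKR p c ω v (k + 1) = k + 1) : minKR p c ω v k = k := by
  rcases minKR_mem p c ω v k with hs | hk
  · exfalso
    have h1 : minKR p c ω v (k + 1) ≤ minKR p c ω v k := Nat.sInf_le (Set.mem_union_left _ hs)
    have h2 := minKR_le p c ω v k
    omega
  · simpa using hk

lemma one_sub_sum_le_prod_one_sub {V : Type*} (J : Finset V) (f : V → ℝ)
    (h0 : ∀ v ∈ J, 0 ≤ f v) (h1 : ∀ v ∈ J, f v ≤ 1) :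
    1 - ∑ v ∈ J, f v ≤ ∏ v ∈ J, (1 - f v) := by
  induction J using Finset.cons_induction with
  | empty => simp
  | cons a s ha ih =>
    rw [Finset.sum_cons, Finset.prod_cons]
    have h0' : ∀ v ∈ s, 0 ≤ f v := fun v hv => h0 v (Finset.mem_cons_of_mem hv)
    have h1' : ∀ v ∈ s, f v ≤ 1 := fun v hv => h1 v (Finset.mem_cons_of_mem hv)
    have ha0 : 0 ≤ f a := h0 a (Finset.mem_cons_self a s)
    have ha1 : f a ≤ 1 := h1 a (Finset.mem_cons_self a s)
    have hs0 : 0 ≤ ∑ v ∈ s, f v := Finset.sum_nonneg h0'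
    have hih := ih h0' h1'
    nlinarith [mul_le_mul_of_nonneg_left hih (sub_nonneg.2 ha1), mul_nonneg ha0 hs0]

/-- `S_k^I` is a supermartingale for the natural filtration of the chain: for
every time `k` and trajectory `ω` with `ω 0 ∉ I`, the conditional expectation of
`S_{k+1}^I` given the history `ω_0,…,ω_k` is at most `S_k^I`. -/
theorem Sproc_supermartingale {V : Type*} [Fintype V]
    (p : V → V → ℝ) (hp0 : ∀ u x : V, 0 ≤ p u x)
    (hrow : ∀ u : V, ∑ x : V, p u x = 1)
    (I : Finset V) (hp1 : ∀ u v : V, v ∈ I → u ≠ v → p u v < 1)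
    (c : ℝ) (hc0 : 0 < c) (hc1 : c ≤ 1)
    (k : ℕ) (ω : ℕ → V) (hω0 : ω 0 ∉ I) :
    ∑ y : V, p (ω k) y * Sproc p c I (k + 1) (Function.update ω (k + 1) y)
      ≤ Sproc p c I k ω := by
  classical
  have hple : ∀ u x : V, p u x ≤ 1 := by
    intro u x
    have h := Finset.single_le_sum (f := fun y => p u y) (fun y _ => hp0 u y) (Finset.mem_univ x)
    rw [hrow u] at h
    exact h
  have hupd : ∀ (y v : V) (t : ℕ), t ≤ k + 1 →
      HmP p (Function.update ω (k + 1) y) v t = HmP p ω v t := by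
    intro y v t ht
    refine (HmP_eq_of_agree p v t fun i hi => ?_).symm
    rw [Function.update_of_ne (by omega)]
  have hminupd : ∀ y v, minKR p c (Function.update ω (k + 1) y) v (k + 1)
      = minKR p c ω v (k + 1) := by
    intro y v
    unfold minKR
    refine sInf_union_congr (k + 1) fun t ht => ?_
    simp only [Set.mem_setOf_eq]
    rw [hupd y v (t + 1) (by omega)]
  have hdich : ∀ v : V, minKR p c ω v (k + 1) = k + 1
      ∨ minKR p c ω v (k + 1) = minKR p c ω v k := by
    intro v
    rcases eq_or_lt_of_le (minKR_le p c ω v (k + 1)) with h | h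
    · exact Or.inl h
    · exact Or.inr (minKR_succ_eq_of_le (by omega))
  have hHnn : ∀ (ω'' : ℕ → V) (v : V) (t : ℕ), 0 ≤ HmP p ω'' v t := by
    intro ω'' v t
    refine Finset.prod_nonneg fun i _ => ?_
    linarith [hple (ω'' i) v]
  by_cases hgood : ∀ v ∈ I, ∀ t ≤ minKR p c ω v k, ω t ≠ v
  · -- main case : indicator of `S_k` equals 1
    have hRHS : Sproc p c I k ω = ∏ v ∈ I, (HmP p ω v (minKR p c ω v k))⁻¹ := by
      simp only [Sproc, if_pos hgood, one_mul]
    set J := I.filter (fun v => minKR p c ω v (k + 1) = k + 1) with hJ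
    have hωk : ∀ v ∈ J, p (ω k) v < 1 := by
      intro v hv
      obtain ⟨hvI, hvN⟩ := Finset.mem_filter.mp hv
      have hmvk : minKR p c ω v k = k := minKR_eq_self_of_succ hvN
      exact hp1 _ _ hvI (hgood v hvI k hmvk.ge)
    have hSy : ∀ y : V,
        Sproc p c I (k + 1) (Function.update ω (k + 1) y)
          = (if y ∉ J then (1 : ℝ) else 0) *
              ((∏ v ∈ J, (1 - p (ω k) v)⁻¹) *
                ∏ v ∈ I, (HmP p ω v (minKR p c ω v k))⁻¹) := by
      intro y
      simp only [Sproc]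
      have hiff : (∀ v ∈ I, ∀ t ≤ minKR p c (Function.update ω (k + 1) y) v (k + 1),
          Function.update ω (k + 1) y t ≠ v) ↔ y ∉ J := by
        constructor
        · intro hind hyJ
          obtain ⟨hyI, hyN⟩ := Finset.mem_filter.mp hyJ
          have hb : k + 1 ≤ minKR p c (Function.update ω (k + 1) y) y (k + 1) := by
            rw [hminupd]; omega
          exact hind y hyI (k + 1) hb (Function.update_self _ _ _)
        · intro hy v hvI t ht
          rw [hminupd] at ht
          rcases hdich v with h1 | h2
          · rcases lt_or_ge t (k + 1) with hlt | hge
            · rw [Function.update_of_ne (by omega)]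
              refine hgood v hvI t ?_
              rw [minKR_eq_self_of_succ h1]; omega
            · have hte : t = k + 1 := by omega
              subst hte
              rw [Function.update_self]
              intro hcon
              apply hy
              rw [hcon]
              exact Finset.mem_filter.mpr ⟨hvI, h1⟩
          · have hle := minKR_le p c ω v k
            rw [Function.update_of_ne (by omega)]
            exact hgood v hvI t (by omega)
      congr 1
      · by_cases hy : y ∉ J
        · rw [if_pos (hiff.mpr hy), if_pos hy]
        · rw [if_neg (fun h => hy (hiff.mp h)), if_neg hy]
      · have step1 : ∀ v ∈ I,
            (HmP p (Function.update ω (k + 1) y) v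
              (minKR p c (Function.update ω (k + 1) y) v (k + 1)))⁻¹
            = (if minKR p c ω v (k + 1) = k + 1 then (1 - p (ω k) v)⁻¹ else 1) *
                (HmP p ω v (minKR p c ω v k))⁻¹ := by
          intro v hvI
          rw [hminupd]
          rcases hdich v with h1 | h2
          · rw [if_pos h1, h1, hupd y v (k + 1) le_rfl, minKR_eq_self_of_succ h1]
            rw [show HmP p ω v (k + 1) = HmP p ω v k * (1 - p (ω k) v) from
              Finset.prod_range_succ _ k]
            rw [mul_inv, mul_comm]
          · have hle := minKR_le p c ω v k
            rw [if_neg (by omega), h2, hupd y v _ (by omega), one_mul]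
        rw [Finset.prod_congr rfl step1, Finset.prod_mul_distrib, hJ,
          Finset.prod_filter]
    have hS : (∑ y : V, p (ω k) y * (if y ∉ J then (1 : ℝ) else 0))
        = 1 - ∑ v ∈ J, p (ω k) v := by
      have h1 : ∀ y : V, p (ω k) y * (if y ∉ J then (1 : ℝ) else 0)
          = (if y ∉ J then p (ω k) y else 0) := by
        intro y; by_cases hy : y ∉ J <;> simp [hy]
      rw [Finset.sum_congr rfl fun y _ => h1 y, ← Finset.sum_filter]
      have hfc : Finset.univ.filter (fun y => y ∉ J) = Jᶜ := by
        ext y; simp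
      rw [hfc]
      have hcs := Finset.sum_compl_add_sum J (fun y => p (ω k) y)
      rw [hrow (ω k)] at hcs
      linarith
    have hPpos : 0 < ∏ v ∈ J, (1 - p (ω k) v) :=
      Finset.prod_pos fun v hv => by linarith [hωk v hv]
    have hkey : (1 - ∑ v ∈ J, p (ω k) v) * (∏ v ∈ J, (1 - p (ω k) v))⁻¹ ≤ 1 := by
      have hws := one_sub_sum_le_prod_one_sub J (fun v => p (ω k) v)
        (fun v _ => hp0 _ v) (fun v _ => hple _ v)
      calc (1 - ∑ v ∈ J, p (ω k) v) * (∏ v ∈ J, (1 - p (ω k) v))⁻¹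
          ≤ (∏ v ∈ J, (1 - p (ω k) v)) * (∏ v ∈ J, (1 - p (ω k) v))⁻¹ :=
            mul_le_mul_of_nonneg_right hws (inv_nonneg.2 hPpos.le)
        _ = 1 := mul_inv_cancel₀ hPpos.ne'
    have hCnn : 0 ≤ ∏ v ∈ I, (HmP p ω v (minKR p c ω v k))⁻¹ :=
      Finset.prod_nonneg fun v _ => inv_nonneg.2 (hHnn ω v _)
    have hQ : (∏ v ∈ J, (1 - p (ω k) v)⁻¹) = (∏ v ∈ J, (1 - p (ω k) v))⁻¹ := by
      rw [Finset.prod_inv_distrib]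
    calc ∑ y : V, p (ω k) y * Sproc p c I (k + 1) (Function.update ω (k + 1) y)
        = (∑ y : V, p (ω k) y * (if y ∉ J then (1 : ℝ) else 0)) *
            ((∏ v ∈ J, (1 - p (ω k) v)⁻¹) *
              ∏ v ∈ I, (HmP p ω v (minKR p c ω v k))⁻¹) := by
          rw [Finset.sum_mul]
          exact Finset.sum_congr rfl fun y _ => by rw [hSy y, mul_assoc]
      _ = ((1 - ∑ v ∈ J, p (ω k) v) * (∏ v ∈ J, (1 - p (ω k) v))⁻¹) *
            ∏ v ∈ I, (HmP p ω v (minKR p c ω v k))⁻¹ := by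
          rw [hS, hQ, mul_assoc]
      _ ≤ 1 * ∏ v ∈ I, (HmP p ω v (minKR p c ω v k))⁻¹ :=
          mul_le_mul_of_nonneg_right hkey hCnn
      _ = Sproc p c I k ω := by rw [one_mul, hRHS]
  · -- degenerate case : indicator of `S_k` equals 0
    push_neg at hgood
    obtain ⟨v, hvI, t, htm, htv⟩ := hgood
    have hR : Sproc p c I k ω = 0 := by
      have hcond : ¬ (∀ v ∈ I, ∀ t ≤ minKR p c ω v k, ω t ≠ v) := by
        push_neg
        exact ⟨v, hvI, t, htm, htv⟩
      simp only [Sproc, if_neg hcond, zero_mul]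
    rw [hR]
    refine le_of_eq (Finset.sum_eq_zero fun y _ => ?_)
    have hz : Sproc p c I (k + 1) (Function.update ω (k + 1) y) = 0 := by
      have hcond : ¬ (∀ v ∈ I, ∀ t ≤ minKR p c (Function.update ω (k + 1) y) v (k + 1),
          Function.update ω (k + 1) y t ≠ v) := by
        push_neg
        refine ⟨v, hvI, t, ?_, ?_⟩
        · rw [hminupd]
          exact htm.trans (minKR_mono p c ω v k)
        · have := minKR_le p c ω v k
          rw [Function.update_of_ne (by omega)]
          exact htv
      simp only [Sproc, if_neg hcond, zero_mul]
    rw [hz, mul_zero]
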